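/- The correlation corr(L_j, L_k) = √(jk)·C(k−1,j)·C(k−1,j−1)·(2k−2j−1)!(2j−1)!/(2k−1)! satisfies corr(L_j, L_k) < (1/2)√(j/k) for all integers 1 ≤ j < k. -/

import Mathlib

open Finset Finset.Nat Nat

lemma vandermonde_two (a c : ℕ) :
    2 * ((a + c + 1).choose (a + 1) * (a + c + 1).choose a)
      ≤ (2 * a + 2 * c + 2).choose (2 * a + 1) := by
  have h : 2 * a + 2 * c + 2 = (a + c + 1) + (a + c + 1) := by ring
  rw [h]
  conv_rhs => rw [Nat.add_choose_eq]
  have hsub : ({((a : ℕ), a + 1), (a + 1, a)} : Finset (ℕ × ℕ)) ⊆ antidiagonal (2 * a + 1) := by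
    intro p hp
    simp only [Finset.mem_insert, Finset.mem_singleton] at hp
    rcases hp with rfl | rfl <;> simp [Finset.mem_antidiagonal] <;> omega
  have hne : ((a : ℕ), a + 1) ≠ (a + 1, a) := by simp
  calc 2 * ((a + c + 1).choose (a + 1) * (a + c + 1).choose a)
      = ∑ p ∈ ({((a : ℕ), a + 1), (a + 1, a)} : Finset (ℕ × ℕ)),
          (a + c + 1).choose p.1 * (a + c + 1).choose p.2 := by
        rw [Finset.sum_pair hne]; ring
    _ ≤ ∑ p ∈ antidiagonal (2 * a + 1),
          (a + c + 1).choose p.1 * (a + c + 1).choose p.2 :=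
        Finset.sum_le_sum_of_subset_of_nonneg hsub (fun _ _ _ => Nat.zero_le _)

lemma nat_key (a c : ℕ) :
    2 * (a + c + 2) * ((a + c + 1).choose (a + 1)) * ((a + c + 1).choose a)
        * (2 * c + 1)! * (2 * a + 1)! < (2 * a + 2 * c + 3)! := by
  set P : ℕ := (a + c + 1).choose (a + 1) * (a + c + 1).choose a with hPdef
  have hP : 0 < P :=
    Nat.mul_pos (Nat.choose_pos (by omega)) (Nat.choose_pos (by omega))
  have hV : 2 * P ≤ (2 * a + 2 * c + 2).choose (2 * a + 1) := vandermonde_two a c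
  have hI : (2 * a + 2 * c + 2).choose (2 * a + 1) * (2 * a + 2 * c + 3)
      = (2 * a + 2 * c + 3).choose (2 * a + 1) * (2 * c + 2) := by
    have := Nat.choose_mul_succ_eq (2 * a + 2 * c + 2) (2 * a + 1)
    have h2 : 2 * a + 2 * c + 2 + 1 - (2 * a + 1) = 2 * c + 2 := by omega
    rw [h2] at this
    convert this using 2
  have hF : (2 * a + 2 * c + 3).choose (2 * a + 1) * (2 * a + 1)! * (2 * c + 2)!
      = (2 * a + 2 * c + 3)! := by
    have h := Nat.choose_mul_factorial_mul_factorial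
      (show 2 * a + 1 ≤ 2 * a + 2 * c + 3 by omega)
    have h2 : 2 * a + 2 * c + 3 - (2 * a + 1) = 2 * c + 2 := by omega
    rwa [h2] at h
  have hFF : (2 * c + 2)! = (2 * c + 2) * (2 * c + 1)! := by
    rw [show 2 * c + 2 = (2 * c + 1) + 1 by ring, Nat.factorial_succ]
  have hFpos : 0 < (2 * c + 1)! * (2 * a + 1)! :=
    Nat.mul_pos (Nat.factorial_pos _) (Nat.factorial_pos _)
  have hkey : 2 * (a + c + 2) * P < (2 * a + 2 * c + 3) * (2 * P) := by nlinarith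
  calc 2 * (a + c + 2) * ((a + c + 1).choose (a + 1)) * ((a + c + 1).choose a)
        * (2 * c + 1)! * (2 * a + 1)!
      = (2 * (a + c + 2) * P) * ((2 * c + 1)! * (2 * a + 1)!) := by rw [hPdef]; ring
    _ < ((2 * a + 2 * c + 3) * (2 * P)) * ((2 * c + 1)! * (2 * a + 1)!) :=
        (Nat.mul_lt_mul_right hFpos).mpr hkey
    _ ≤ ((2 * a + 2 * c + 3) * ((2 * a + 2 * c + 2).choose (2 * a + 1)))
          * ((2 * c + 1)! * (2 * a + 1)!) :=
        Nat.mul_le_mul_right _ (Nat.mul_le_mul_left _ hV)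
    _ = ((2 * a + 2 * c + 2).choose (2 * a + 1) * (2 * a + 2 * c + 3))
          * ((2 * c + 1)! * (2 * a + 1)!) := by ring
    _ = ((2 * a + 2 * c + 3).choose (2 * a + 1) * (2 * c + 2))
          * ((2 * c + 1)! * (2 * a + 1)!) := by rw [hI]
    _ = (2 * a + 2 * c + 3).choose (2 * a + 1) * (2 * a + 1)!
          * ((2 * c + 2) * (2 * c + 1)!) := by ring
    _ = (2 * a + 2 * c + 3).choose (2 * a + 1) * (2 * a + 1)! * (2 * c + 2)! := by
        rw [hFF]
    _ = (2 * a + 2 * c + 3)! := hF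

lemma nat_key' (j k : ℕ) (hj : 1 ≤ j) (hjk : j < k) :
    2 * k * ((k - 1).choose j) * ((k - 1).choose (j - 1))
        * (2 * k - 2 * j - 1)! * (2 * j - 1)! < (2 * k - 1)! := by
  obtain ⟨a, rfl⟩ : ∃ a, j = a + 1 := ⟨j - 1, by omega⟩
  obtain ⟨c, rfl⟩ : ∃ c, k = a + c + 2 := ⟨k - a - 2, by omega⟩
  have e1 : a + c + 2 - 1 = a + c + 1 := by omega
  have e2 : a + 1 - 1 = a := by omega
  have e3 : 2 * (a + c + 2) - 2 * (a + 1) - 1 = 2 * c + 1 := by omega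
  have e4 : 2 * (a + 1) - 1 = 2 * a + 1 := by omega
  have e5 : 2 * (a + c + 2) - 1 = 2 * a + 2 * c + 3 := by omega
  rw [e1, e2, e3, e4, e5]
  have := nat_key a c
  calc 2 * (a + c + 2) * (a + c + 1).choose (a + 1) * (a + c + 1).choose a
        * (2 * c + 1)! * (2 * a + 1)! < (2 * a + 2 * c + 3)! := this
    _ = _ := rfl

/-- The correlation `corr(L_j,L_k) = √(jk) C(k-1,j) C(k-1,j-1) (2k-2j-1)!(2j-1)!/(2k-1)!`
is bounded by `(1/2)√(j/k)` for all `1 ≤ j < k`. -/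
theorem correlation_bound (j k : ℕ) (hj : 1 ≤ j) (hjk : j < k) :
    Real.sqrt ((j : ℝ) * k) * ((k - 1).choose j : ℝ) * ((k - 1).choose (j - 1) : ℝ)
        * (Nat.factorial (2 * k - 2 * j - 1) : ℝ) * (Nat.factorial (2 * j - 1) : ℝ)
        / (Nat.factorial (2 * k - 1) : ℝ)
      < (1 / 2) * Real.sqrt ((j : ℝ) / k) := by
  have hk0 : (0 : ℝ) < (k : ℝ) := Nat.cast_pos.mpr (by omega)
  have hj0 : (0 : ℝ) < (j : ℝ) := Nat.cast_pos.mpr hj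
  have he : (0 : ℝ) < ((2 * k - 1)! : ℝ) := Nat.cast_pos.mpr (Nat.factorial_pos _)
  have hs : 0 < Real.sqrt ((j : ℝ) / k) := Real.sqrt_pos.mpr (by positivity)
  have hN : 2 * (k : ℝ) * (((k - 1).choose j : ℝ) * ((k - 1).choose (j - 1) : ℝ)
      * ((2 * k - 2 * j - 1)! : ℝ) * ((2 * j - 1)! : ℝ)) < ((2 * k - 1)! : ℝ) := by
    have h := nat_key' j k hj hjk
    have := (Nat.cast_lt (α := ℝ)).mpr h
    push_cast at this
    convert this using 1
    · rfl
    ring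
  have hsqrt : Real.sqrt ((j : ℝ) * k) = Real.sqrt ((j : ℝ) / k) * k := by
    have h1 : (j : ℝ) * k = ((j : ℝ) / k) * k ^ 2 := by
      field_simp
    rw [h1, Real.sqrt_mul (by positivity), Real.sqrt_sq hk0.le]
  have h2 : (k : ℝ) * (((k - 1).choose j : ℝ) * ((k - 1).choose (j - 1) : ℝ)
      * ((2 * k - 2 * j - 1)! : ℝ) * ((2 * j - 1)! : ℝ)) / ((2 * k - 1)! : ℝ) < 1 / 2 := by
    rw [div_lt_iff₀ he]
    linarith
  calc Real.sqrt ((j : ℝ) * k) * ((k - 1).choose j : ℝ) * ((k - 1).choose (j - 1) : ℝ)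
        * ((2 * k - 2 * j - 1)! : ℝ) * ((2 * j - 1)! : ℝ) / ((2 * k - 1)! : ℝ)
      = Real.sqrt ((j : ℝ) / k) * ((k : ℝ) * (((k - 1).choose j : ℝ)
          * ((k - 1).choose (j - 1) : ℝ) * ((2 * k - 2 * j - 1)! : ℝ)
          * ((2 * j - 1)! : ℝ)) / ((2 * k - 1)! : ℝ)) := by
        rw [hsqrt]; ring
    _ < Real.sqrt ((j : ℝ) / k) * (1 / 2) := by
        exact mul_lt_mul_of_pos_left h2 hs
    _ = (1 / 2) * Real.sqrt ((j : ℝ) / k) := by ring
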